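/- Suppose F_1, F_2, F_{1|2}, F_{2|1} are differentiable at s = 1 with F_1(1) = F_2(1) = F_{1|2}(1) = F_{2|1}(1) = 1, derivatives μ_1, μ_2, μ_{1|2}, μ_{2|1} respectively, and μ_{1|2} + μ_{2|1} ≠ 0. Then lim_{s→1} (F_1(s) - F_2(s) F_{1|2}(s))/(1 - F_{1|2}(s) F_{2|1}(s)) = (μ_2 - μ_1 + μ_{1|2})/(μ_{1|2} + μ_{2|1}). -/

import Mathlib

theorem stmt_6 (F1 F2 F12 F21 : ℝ → ℝ) (μ1 μ2 μ12 μ21 : ℝ)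
    (hF1 : HasDerivAt F1 μ1 1) (hF2 : HasDerivAt F2 μ2 1)
    (hF12 : HasDerivAt F12 μ12 1) (hF21 : HasDerivAt F21 μ21 1)
    (hv1 : F1 1 = 1) (hv2 : F2 1 = 1) (hv12 : F12 1 = 1) (hv21 : F21 1 = 1)
    (hμ : μ12 + μ21 ≠ 0) :
    Filter.Tendsto
      (fun s : ℝ => (F1 s - F2 s * F12 s) / (1 - F12 s * F21 s))
      (nhdsWithin 1 {(1 : ℝ)}ᶜ) (nhds ((μ2 - μ1 + μ12) / (μ12 + μ21))) := by
  have hG : HasDerivAt (fun s => F1 s - F2 s * F12 s) (μ1 - (μ2 * F12 1 + F2 1 * μ12)) 1 :=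
    hF1.sub (hF2.mul hF12)
  have hH : HasDerivAt (fun s => 1 - F12 s * F21 s) (0 - (μ12 * F21 1 + F12 1 * μ21)) 1 :=
    (hasDerivAt_const 1 (1:ℝ)).sub (hF12.mul hF21)
  rw [hv12, hv2] at hG
  rw [hv21, hv12] at hH
  have hGs := hasDerivAt_iff_tendsto_slope.mp hG
  have hHs := hasDerivAt_iff_tendsto_slope.mp hH
  have hH0 : (0 - (μ12 * 1 + 1 * μ21)) ≠ 0 := by intro h; apply hμ; linarith
  have hdiv := hGs.div hHs hH0
  have heq : ∀ᶠ s in nhdsWithin 1 {(1:ℝ)}ᶜ,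
      slope (fun s => F1 s - F2 s * F12 s) 1 s / slope (fun s => 1 - F12 s * F21 s) 1 s
        = (F1 s - F2 s * F12 s) / (1 - F12 s * F21 s) := by
    filter_upwards [self_mem_nhdsWithin] with s hs
    have hs1 : s - (1:ℝ) ≠ 0 := sub_ne_zero.mpr hs
    rw [slope_def_field, slope_def_field, hv1, hv2, hv12, hv21]
    field_simp
    simp only [sub_self, sub_zero]
  have hfin := Filter.Tendsto.congr' heq hdiv
  have hval : (μ1 - (μ2*1+1*μ12))/(0-(μ12*1+1*μ21)) = (μ2-μ1+μ12)/(μ12+μ21) := by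
    rw [show (μ1 - (μ2*1+1*μ12)) = -(μ2-μ1+μ12) by ring,
        show ((0:ℝ)-(μ12*1+1*μ21)) = -(μ12+μ21) by ring, neg_div_neg_eq]
  rwa [hval] at hfin
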